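/- Let n ≥ 1 and let α be a fixed-point-free involution of ZMod (2n) that is non-crossing, and let p be the permutation of ZMod (2n) defined by p j = α (j + 1). Then the simple graph whose vertex set is the set of orbits of p, and in which two distinct orbits O and O' are adjacent if and only if there exists i ∈ ZMod (2n) with i ∈ O and α i ∈ O', is a tree. (This is the paper's assertion, used in the proof of its chord-move lemma, that a connected planar chord diagram is dual to a tree whose vertices are the planar loops and whose edges are the chords.) -/

import Mathlib

/-- `j` lies strictly between `a` and `b` in the positive cyclic order on `ZMod m`:
the open cyclic interval from `a` to `b` consists of the points met strictly between
`a` and `b` when traveling from `a` in the positive direction. -/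
def CyclicBetween {m : ℕ} (a b j : ZMod m) : Prop :=
  0 < (j - a).val ∧ (j - a).val < (b - a).val

/-- The chords `{i, α i}` and `{j, α j}` cross: exactly one of `j`, `α j` lies in the
open cyclic interval from `i` to `α i`. -/
def ChordsCross {m : ℕ} (α : Equiv.Perm (ZMod m)) (i j : ZMod m) : Prop :=
  Xor' (CyclicBetween i (α i) j) (CyclicBetween i (α i) (α j))

/-- The chord diagram encoded by the involution `α` is non-crossing (planar):
no two distinct chords cross. -/
def NonCrossing {m : ℕ} (α : Equiv.Perm (ZMod m)) : Prop :=
  ∀ i j : ZMod m, j ≠ i → j ≠ α i → ¬ ChordsCross α i j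

/-- The "planar loop" permutation `p j = α (j + 1)` on arc labels. -/
def loopPerm {m : ℕ} (α : Equiv.Perm (ZMod m)) : Equiv.Perm (ZMod m) :=
  (Equiv.addRight (1 : ZMod m)).trans α

/-- The setoid whose equivalence classes are the orbits of a permutation. -/
def orbitSetoid {β : Type*} (p : Equiv.Perm β) : Setoid β :=
  ⟨p.SameCycle,
    ⟨fun x => Equiv.Perm.SameCycle.refl p x, fun h => h.symm, fun h h' => h.trans h'⟩⟩

set_option linter.unusedSectionVars false


section ZModHelpers
variable {m : ℕ}
lemma zval_sub [NeZero m] (x y : ZMod m) :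
    (x - y).val = if y.val ≤ x.val then x.val - y.val else x.val + m - y.val := by
  have hx := ZMod.val_lt x
  have hy := ZMod.val_lt y
  rw [sub_eq_add_neg, ZMod.val_add, ZMod.neg_val]
  by_cases h0 : y = 0
  · subst h0
    simp [Nat.mod_eq_of_lt hx]
  · have hy0 : y.val ≠ 0 := fun h => h0 (ZMod.val_injective m (by simpa using h))
    rw [if_neg h0]
    rcases le_or_gt y.val x.val with h | h
    · rw [if_pos h]
      have : x.val + (m - y.val) = (x.val - y.val) + m := by omega
      rw [this, Nat.add_mod_right, Nat.mod_eq_of_lt (by omega)]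
    · rw [if_neg (by omega), Nat.mod_eq_of_lt (by omega)]
      omega

lemma zmod_val_eq_iff [NeZero m] (x y : ZMod m) : x = y ↔ x.val = y.val :=
  ⟨fun h => h ▸ rfl, fun h => ZMod.val_injective m h⟩
end ZModHelpers

lemma exists_short_chord {m : ℕ} [NeZero m] (hm : 1 < m) (α : Equiv.Perm (ZMod m))
    (hfree : ∀ i, α i ≠ i) (hplanar : NonCrossing α) : ∃ i, α i = i + 1 := by
  haveI : Fact (1 < m) := ⟨hm⟩
  obtain ⟨i, -, hmin⟩ := Finset.exists_min_image Finset.univ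
    (fun i : ZMod m => (α i - i).val) ⟨0, Finset.mem_univ 0⟩
  refine ⟨i, ?_⟩
  set d := (α i - i).val with hd
  have hd0 : d ≠ 0 := by
    intro h
    exact hfree i (by
      have : α i - i = 0 := (ZMod.val_eq_zero _).mp (by rw [← hd]; exact h)
      linear_combination (norm := abel) this)
  rcases eq_or_lt_of_le (Nat.one_le_iff_ne_zero.mpr hd0) with h1 | h2
  · -- d = 1, so α i = i + 1
    have : α i - i = 1 := by
      rw [zmod_val_eq_iff, ZMod.val_one]
      exact h1.symm
    linear_combination (norm := abel) this
  · -- d ≥ 2: derive a contradiction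
    exfalso
    have hone : ((1 : ZMod m)).val = 1 := ZMod.val_one m
    have hsucc : (i + 1 - i).val = 1 := by rw [add_sub_cancel_left, hone]
    have hne1 : (i + 1 : ZMod m) ≠ i := by
      intro h
      have : (1 : ZMod m) = 0 := by linear_combination (norm := abel) h
      simp at this
    have hne2 : (i + 1 : ZMod m) ≠ α i := by
      intro h
      rw [← h] at hd
      rw [hd, hsucc] at h2
      omega
    have hcross := hplanar i (i + 1) hne1 hne2
    have hA : CyclicBetween i (α i) (i + 1) := ⟨by omega, by rw [hsucc]; omega⟩
    have hB : CyclicBetween i (α i) (α (i + 1)) := by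
      by_contra hB
      exact hcross (Or.inl ⟨hA, hB⟩)
    obtain ⟨ht0, htd⟩ := hB
    set t := (α (i + 1) - i).val with htdef
    have ht1 : t ≠ 1 := by
      intro h
      have : α (i + 1) - i = 1 := by rw [zmod_val_eq_iff, ZMod.val_one]; exact h
      exact hfree (i + 1) (by linear_combination (norm := abel) this)
    have hval : (α (i + 1) - (i + 1)).val = t - 1 := by
      have : α (i + 1) - (i + 1) = (α (i + 1) - i) - 1 := by ring
      rw [this, zval_sub, hone]
      rw [if_pos (by omega)]
    have := hmin (i + 1) (Finset.mem_univ _)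
    rw [hval] at this
    omega

section Orbits

open Equiv

lemma sameCycle_step {β : Type*} (p : Equiv.Perm β) (x : β) : p.SameCycle x (p x) :=
  ⟨1, by simp⟩

lemma sameCycle_map {β γ : Type*} [Finite β] {p : Equiv.Perm β} {q : Equiv.Perm γ}
    (f : β → γ) (hf : ∀ x, q.SameCycle (f x) (f (p x))) {x y : β}
    (h : p.SameCycle x y) : q.SameCycle (f x) (f y) := by
  obtain ⟨k, -, rfl⟩ := h.exists_pow_eq'
  clear h
  induction k with
  | zero => simpa using Equiv.Perm.SameCycle.refl q (f x)
  | succ k ih =>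
      have : (p ^ (k + 1)) x = p ((p ^ k) x) := by
        rw [pow_succ']; rfl
      rw [this]
      exact Equiv.Perm.SameCycle.trans ih (hf _)

lemma orbit_card_congr {β γ : Type*} [Finite β] (p : Equiv.Perm β) (q : Equiv.Perm γ)
    (e : β ≃ γ) (he : ∀ x, q (e x) = e (p x)) :
    Nat.card (Quotient (orbitSetoid p)) = Nat.card (Quotient (orbitSetoid q)) := by
  haveI : Finite γ := Finite.of_equiv β e
  refine Nat.card_congr (Quotient.congr e fun a b => ⟨?_, ?_⟩)
  · exact fun h => sameCycle_map e (fun x => (he x) ▸ sameCycle_step q (e x)) h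
  · intro h
    have h' := sameCycle_map (p := q) (q := p) e.symm (fun y => by
      have h2 := he (e.symm y)
      simp only [Equiv.apply_symm_apply] at h2
      have h3 : e.symm (q y) = p (e.symm y) := by rw [h2, Equiv.symm_apply_apply]
      rw [h3]
      exact sameCycle_step p (e.symm y)) h
    exact (by simpa using h' : p.SameCycle a b)

end Orbits

lemma loopPerm_apply {m : ℕ} (α : Equiv.Perm (ZMod m)) (j : ZMod m) :
    loopPerm α j = α (j + 1) := rfl

section MoreZMod

variable {m : ℕ} [NeZero m]

lemma add_one_val_small [Fact (1 < m)] {x : ZMod m} (h : x.val + 1 < m) :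
    (x + 1).val = x.val + 1 := by
  rw [ZMod.val_add_of_lt (by rw [ZMod.val_one]; omega), ZMod.val_one]

lemma add_one_zero {x : ZMod m} (h : x.val + 1 = m) : x + 1 = 0 := by
  have hx : ((x.val : ℕ) : ZMod m) = x := ZMod.natCast_rightInverse x
  rw [← hx, ← Nat.cast_one, ← Nat.cast_add, h, ZMod.natCast_self]

end MoreZMod

section Contract

def down (M : ℕ) (X : ZMod (M + 2)) : ZMod M := (X.val : ZMod M)

def up (M : ℕ) (x : ZMod M) : ZMod (M + 2) := (x.val : ZMod (M + 2))

variable {M : ℕ} [NeZero M]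

lemma up_val (x : ZMod M) : (up M x).val = x.val :=
  ZMod.val_cast_of_lt (lt_trans x.val_lt (by omega))

lemma down_up (x : ZMod M) : down M (up M x) = x := by
  rw [down, up_val]
  exact ZMod.natCast_rightInverse x

lemma down_val {X : ZMod (M + 2)} (h : X.val < M) : (down M X).val = X.val := by
  rw [down, ZMod.val_natCast, Nat.mod_eq_of_lt h]

lemma up_down {X : ZMod (M + 2)} (h : X.val < M) : up M (down M X) = X := by
  rw [up, down_val h]
  exact ZMod.natCast_rightInverse X

lemma up_lt (x : ZMod M) : (up M x).val < M := by rw [up_val]; exact x.val_lt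

lemma tricho (X : ZMod (M + 2)) :
    X.val < M ∨ X = ((M : ℕ) : ZMod (M + 2)) ∨ X = ((M + 1 : ℕ) : ZMod (M + 2)) := by
  have h1 : X.val < M + 2 := X.val_lt
  rcases Nat.lt_or_ge X.val M with h | h
  · exact Or.inl h
  · have hA : (((M : ℕ) : ZMod (M + 2))).val = M := ZMod.val_cast_of_lt (by omega)
    have hB : (((M + 1 : ℕ) : ZMod (M + 2))).val = M + 1 := ZMod.val_cast_of_lt (by omega)
    have : X.val = M ∨ X.val = M + 1 := by omega
    rcases this with h | h
    · exact Or.inr (Or.inl ((zmod_val_eq_iff _ _).mpr (by rw [hA, h])))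
    · exact Or.inr (Or.inr ((zmod_val_eq_iff _ _).mpr (by rw [hB, h])))

lemma between_lift {a b j : ZMod (M + 2)} (ha : a.val < M) (hb : b.val < M) (hj : j.val < M) :
    CyclicBetween (down M a) (down M b) (down M j) ↔ CyclicBetween a b j := by
  unfold CyclicBetween
  rw [zval_sub, zval_sub, zval_sub, zval_sub, down_val ha, down_val hb, down_val hj]
  split_ifs <;> omega

lemma contract (hM : 1 < M) (α : Equiv.Perm (ZMod (M + 2)))
    (hinv : ∀ i, α (α i) = i) (hfree : ∀ i, α i ≠ i) (hplanar : NonCrossing α)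
    (hA : α ((M : ℕ) : ZMod (M + 2)) = ((M + 1 : ℕ) : ZMod (M + 2))) :
    ∃ α' : Equiv.Perm (ZMod M), (∀ i, α' (α' i) = i) ∧ (∀ i, α' i ≠ i) ∧ NonCrossing α' ∧
      Nat.card (Quotient (orbitSetoid (loopPerm α))) =
        Nat.card (Quotient (orbitSetoid (loopPerm α'))) + 1 := by
  classical
  haveI : Fact (1 < M) := ⟨hM⟩
  haveI : Fact (1 < M + 2) := ⟨by omega⟩
  set A : ZMod (M + 2) := ((M : ℕ) : ZMod (M + 2)) with hAdef
  set B : ZMod (M + 2) := ((M + 1 : ℕ) : ZMod (M + 2)) with hBdef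
  have hAval : A.val = M := ZMod.val_cast_of_lt (by omega)
  have hBval : B.val = M + 1 := ZMod.val_cast_of_lt (by omega)
  have hB : α B = A := by rw [← hA, hinv]
  have hclosed : ∀ X : ZMod (M + 2), X.val < M → (α X).val < M := by
    intro X hX
    rcases tricho (α X) with h | h | h
    · exact h
    · exfalso
      rw [← hAdef] at h
      have : X = B := α.injective (by rw [h, hB])
      rw [this, hBval] at hX; omega
    · exfalso
      rw [← hBdef] at h
      have : X = A := α.injective (by rw [h, hA])
      rw [this, hAval] at hX; omega
  -- the contracted involution
  set f : ZMod M → ZMod M := fun x => down M (α (up M x)) with hfdef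
  have hf_invol : Function.Involutive f := by
    intro x
    show down M (α (up M (down M (α (up M x))))) = x
    rw [up_down (hclosed _ (up_lt x)), hinv, down_up]
  set α' : Equiv.Perm (ZMod M) := hf_invol.toPerm with hα'def
  have hα'apply : ∀ x, α' x = down M (α (up M x)) := fun x => rfl
  have hinv' : ∀ i, α' (α' i) = i := fun i => hf_invol i
  have hfree' : ∀ i, α' i ≠ i := by
    intro i h
    rw [hα'apply] at h
    apply hfree (up M i)
    calc α (up M i) = up M (down M (α (up M i))) := (up_down (hclosed _ (up_lt i))).symm
    _ = up M i := by rw [h]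
  have hplanar' : NonCrossing α' := by
    intro i j hji hjαi hcross
    have e1 : CyclicBetween (down M (up M i)) (down M (α (up M i))) (down M (up M j)) ↔
        CyclicBetween (up M i) (α (up M i)) (up M j) :=
      between_lift (up_lt i) (hclosed _ (up_lt i)) (up_lt j)
    have e2 : CyclicBetween (down M (up M i)) (down M (α (up M i))) (down M (α (up M j))) ↔
        CyclicBetween (up M i) (α (up M i)) (α (up M j)) :=
      between_lift (up_lt i) (hclosed _ (up_lt i)) (hclosed _ (up_lt j))
    simp only [down_up] at e1 e2
    apply hplanar (up M i) (up M j)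
    · intro h
      apply hji
      rw [← down_up (M := M) j, ← down_up (M := M) i, h]
    · intro h
      apply hjαi
      rw [hα'apply, ← h, down_up]
    · unfold ChordsCross at hcross ⊢
      rw [← e1, ← e2]
      rw [hα'apply, hα'apply] at hcross
      exact hcross
  refine ⟨α', hinv', hfree', hplanar', ?_⟩
  -- now the orbit count
  set p := loopPerm α with hpdef
  set p' := loopPerm α' with hp'def
  have hA1 : A + 1 = B := by
    rw [zmod_val_eq_iff, add_one_val_small (by rw [hAval]; omega), hAval, hBval]
  have hB1 : B + 1 = 0 := add_one_zero (by rw [hBval])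
  have hpA : p A = A := by rw [loopPerm_apply, hA1, hB]
  have hpB : p B = α 0 := by rw [loopPerm_apply, hB1]
  have h0lt : ((0 : ZMod (M + 2))).val < M := by rw [ZMod.val_zero]; omega
  have hα0 : (α 0).val < M := hclosed 0 h0lt
  have hup0 : up M (0 : ZMod M) = 0 := by rw [up, ZMod.val_zero, Nat.cast_zero]
  -- step lemma, small to big
  have step1 : ∀ x : ZMod M, p.SameCycle (up M x) (up M (p' x)) := by
    intro x
    have hxlt := x.val_lt
    have hp'x : p' x = down M (α (up M (x + 1))) := rfl
    rcases Nat.lt_or_ge (x.val + 1) M with h | h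
    · have e1 : up M x + 1 = up M (x + 1) := by
        rw [zmod_val_eq_iff, add_one_val_small (by rw [up_val]; omega), up_val, up_val,
          add_one_val_small h]
      have key : up M (p' x) = p (up M x) := by
        rw [hp'x, up_down (hclosed _ (up_lt _)), loopPerm_apply, e1]
      rw [key]
      exact sameCycle_step p (up M x)
    · have hxm : x.val + 1 = M := by omega
      have hx1 : x + 1 = 0 := add_one_zero hxm
      have hupx1 : up M x + 1 = A := by
        rw [zmod_val_eq_iff, add_one_val_small (by rw [up_val]; omega), up_val, hAval, hxm]
      have h1 : p (up M x) = B := by rw [loopPerm_apply, hupx1, hA]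
      have hkey : up M (p' x) = α 0 := by rw [hp'x, hx1, hup0, up_down hα0]
      rw [hkey]
      have s1 := sameCycle_step p (up M x); rw [h1] at s1
      have s2 := sameCycle_step p B; rw [hpB] at s2
      exact s1.trans s2
  set D : ZMod (M + 2) → ZMod M := fun X => if X.val < M then down M X else down M (α 0)
    with hDdef
  have hDup : ∀ x : ZMod M, D (up M x) = x := by
    intro x
    show (if (up M x).val < M then down M (up M x) else down M (α 0)) = x
    rw [if_pos (up_lt x), down_up]
  have hDB : D B = down M (α 0) := by
    show (if B.val < M then down M B else down M (α 0)) = _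
    rw [if_neg (by rw [hBval]; omega)]
  have hDsmall : ∀ X : ZMod (M + 2), X.val < M → D X = down M X := by
    intro X h
    show (if X.val < M then down M X else down M (α 0)) = _
    rw [if_pos h]
  -- step lemma, big to small
  have step2 : ∀ X : ZMod (M + 2), p'.SameCycle (D X) (D (p X)) := by
    intro X
    rcases tricho X with hX | hX | hX
    · have hDX : D X = down M X := hDsmall X hX
      rcases Nat.lt_or_ge (X.val + 1) M with h | h
      · have hX1val : (X + 1).val = X.val + 1 :=
          add_one_val_small (by omega)
        have hc : (α (X + 1)).val < M := hclosed _ (by rw [hX1val]; omega)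
        have hpX : p X = α (X + 1) := loopPerm_apply α X
        have hDpX : D (p X) = down M (α (X + 1)) := by rw [hpX]; exact hDsmall _ hc
        have key : p' (D X) = D (p X) := by
          have h1 : down M X + 1 = down M (X + 1) := by
            rw [zmod_val_eq_iff, add_one_val_small (by rw [down_val hX]; omega),
              down_val hX, down_val (by rw [hX1val]; omega), hX1val]
          rw [hDX, hDpX, loopPerm_apply, hα'apply, h1,
            up_down (show (X + 1).val < M by rw [hX1val]; omega)]
        rw [← key]
        exact sameCycle_step p' (D X)
      · have hXm : X.val + 1 = M := by omega
        have hX1 : X + 1 = A := by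
          rw [zmod_val_eq_iff, add_one_val_small (by omega), hAval, hXm]
        have hpX : p X = B := by rw [loopPerm_apply, hX1, hA]
        have hDpX : D (p X) = down M (α 0) := by rw [hpX, hDB]
        have key : p' (D X) = down M (α 0) := by
          rw [hDX, loopPerm_apply, hα'apply]
          have : down M X + 1 = 0 := add_one_zero (by rw [down_val hX]; exact hXm)
          rw [this, hup0]
        rw [hDpX, ← key]
        exact sameCycle_step p' (D X)
    · subst hX
      rw [hpA]
    · subst hX
      rw [hpB, hDB, hDsmall _ hα0]
  have L4 : ∀ X : ZMod (M + 2), X ≠ A → p.SameCycle (up M (D X)) X := by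
    intro X hXA
    rcases tricho X with hX | hX | hX
    · rw [hDsmall X hX, up_down hX]
    · exact absurd hX hXA
    · subst hX
      rw [hDB, up_down hα0, ← hpB]
      exact (sameCycle_step p B).symm
  have L5 : ∀ X : ZMod (M + 2), p.SameCycle X A → X = A := by
    rintro X ⟨k, hk⟩
    have hfix : (p ^ k) A = A := Function.IsFixedPt.perm_zpow hpA k
    exact (p ^ k).injective (hk.trans hfix.symm)
  -- the equivalence of quotients
  have wd1 : ∀ a b : ZMod (M + 2), (orbitSetoid p) a b →
      (if a = A then (none : Option (Quotient (orbitSetoid p'))) else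
        some (Quotient.mk (orbitSetoid p') (D a))) =
      (if b = A then none else some (Quotient.mk (orbitSetoid p') (D b))) := by
    intro a b hab
    by_cases ha : a = A
    · have hb : b = A := L5 b (ha ▸ Equiv.Perm.SameCycle.symm hab)
      rw [if_pos ha, if_pos hb]
    · have hb : b ≠ A := fun h => ha (L5 a (h ▸ hab))
      rw [if_neg ha, if_neg hb]
      exact congrArg _ (Quotient.sound (sameCycle_map D step2 hab))
  have wd2 : ∀ a b : ZMod M, (orbitSetoid p') a b →
      Quotient.mk (orbitSetoid p) (up M a) = Quotient.mk (orbitSetoid p) (up M b) :=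
    fun a b hab => Quotient.sound (sameCycle_map (up M) step1 hab)
  let toF : Quotient (orbitSetoid p) → Option (Quotient (orbitSetoid p')) :=
    Quotient.lift (fun X => if X = A then none else some (Quotient.mk (orbitSetoid p') (D X))) wd1
  let fromF : Option (Quotient (orbitSetoid p')) → Quotient (orbitSetoid p) :=
    fun o => o.elim (Quotient.mk (orbitSetoid p) A)
      (Quotient.lift (fun x => Quotient.mk (orbitSetoid p) (up M x)) wd2)
  have hE : Nat.card (Quotient (orbitSetoid p)) =
      Nat.card (Option (Quotient (orbitSetoid p'))) := by
    refine Nat.card_congr ⟨toF, fromF, ?_, ?_⟩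
    · intro q
      induction q using Quotient.ind with
      | _ X =>
        by_cases hX : X = A
        · subst hX
          show fromF (if A = A then _ else _) = _
          rw [if_pos rfl]
          rfl
        · show fromF (if X = A then _ else _) = _
          rw [if_neg hX]
          exact Quotient.sound (L4 X hX)
    · intro o
      rcases o with - | q
      · show (if A = A then (none : Option (Quotient (orbitSetoid p'))) else _) = none
        rw [if_pos rfl]
      · induction q using Quotient.ind with
        | _ x =>
          show (if up M x = A then (none : Option (Quotient (orbitSetoid p'))) else
            some (Quotient.mk (orbitSetoid p') (D (up M x)))) = some (Quotient.mk _ x)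
          rw [if_neg (by
            intro h
            have := up_val x
            rw [h, hAval] at this
            exact absurd this.symm (Nat.ne_of_lt x.val_lt)), hDup]
  rw [hE, Finite.card_option]

end Contract

section Rotate

lemma rotate {m : ℕ} [NeZero m] (α : Equiv.Perm (ZMod m))
    (hinv : ∀ i, α (α i) = i) (hfree : ∀ i, α i ≠ i) (hplanar : NonCrossing α) (c : ZMod m) :
    ∃ αr : Equiv.Perm (ZMod m), (∀ x, αr x = α (x + c) - c) ∧ (∀ i, αr (αr i) = i) ∧
      (∀ i, αr i ≠ i) ∧ NonCrossing αr ∧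
      Nat.card (Quotient (orbitSetoid (loopPerm α))) =
        Nat.card (Quotient (orbitSetoid (loopPerm αr))) := by
  set αr : Equiv.Perm (ZMod m) := (Equiv.addRight c).trans (α.trans (Equiv.subRight c))
    with hαr
  have happly : ∀ x, αr x = α (x + c) - c := fun x => rfl
  have hsubadd : ∀ x : ZMod m, αr x + c = α (x + c) := fun x => by
    rw [happly]; ring
  have hinvr : ∀ i, αr (αr i) = i := by
    intro i
    rw [happly, happly, sub_add_cancel, hinv]
    ring
  have hfreer : ∀ i, αr i ≠ i := by
    intro i h
    rw [happly] at h
    apply hfree (i + c)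
    rw [sub_eq_iff_eq_add] at h
    rw [h]
  have between_rot : ∀ a b j : ZMod m, CyclicBetween (a + c) (b + c) (j + c) ↔
      CyclicBetween a b j := by
    intro a b j
    unfold CyclicBetween
    rw [add_sub_add_right_eq_sub, add_sub_add_right_eq_sub]
  have hplanarr : NonCrossing αr := by
    intro i j h1 h2 hcross
    apply hplanar (i + c) (j + c)
    · exact fun h => h1 (by
        have := add_right_cancel h
        exact this)
    · intro h
      apply h2
      rw [happly, ← h]
      ring
    · have e1 : CyclicBetween i (αr i) j ↔
          CyclicBetween (i + c) (α (i + c)) (j + c) := by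
        rw [← hsubadd i]
        exact (between_rot i (αr i) j).symm
      have e2 : CyclicBetween i (αr i) (αr j) ↔
          CyclicBetween (i + c) (α (i + c)) (α (j + c)) := by
        rw [← hsubadd i, ← hsubadd j]
        exact (between_rot i (αr i) (αr j)).symm
      unfold ChordsCross at hcross ⊢
      rw [← e1, ← e2]
      exact hcross
  refine ⟨αr, happly, hinvr, hfreer, hplanarr, ?_⟩
  apply orbit_card_congr (loopPerm α) (loopPerm αr) (Equiv.subRight c)
  intro x
  rw [Equiv.subRight_apply, Equiv.subRight_apply, loopPerm_apply, loopPerm_apply]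
  have : x - c + 1 + c = x + 1 := by ring
  rw [happly, this]

end Rotate

lemma card_orbits : ∀ n : ℕ, 1 ≤ n → ∀ α : Equiv.Perm (ZMod (2 * n)),
    (∀ i, α (α i) = i) → (∀ i, α i ≠ i) → NonCrossing α →
    Nat.card (Quotient (orbitSetoid (loopPerm α))) = n + 1 := by
  intro n
  induction n with
  | zero => omega
  | succ k ih =>
    intro _ α hinv hfree hplanar
    haveI : NeZero (2 * (k + 1)) := ⟨by omega⟩
    by_cases hk : k = 0
    · -- base case m = 2
      subst hk
      have hone : ∀ y z : ZMod (2 * 1), y ≠ z → y = z + 1 := by decide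
      have hloop : loopPerm α = 1 := by
        apply Equiv.ext
        intro j
        rw [loopPerm_apply]
        have h1 : α (j + 1) = (j + 1) + 1 := hone _ _ (hfree (j + 1))
        have h2 : ∀ j : ZMod (2 * 1), j + 1 + 1 = j := by decide
        rw [h1, h2]
        rfl
      rw [hloop]
      have : Nat.card (Quotient (orbitSetoid (1 : Equiv.Perm (ZMod (2 * 1))))) =
          Nat.card (ZMod (2 * 1)) := by
        refine Nat.card_congr ⟨Quotient.lift id (fun a b h => ?_), Quotient.mk _, ?_, ?_⟩
        · exact Equiv.Perm.sameCycle_one.mp h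
        · intro q
          induction q using Quotient.ind with
          | _ x => rfl
        · intro x
          rfl
      rw [this, Nat.card_zmod]
    · -- inductive step
      have hk1 : 1 ≤ k := by omega
      haveI : NeZero (2 * k) := ⟨by omega⟩
      have h2 : 1 < 2 * (k + 1) := by omega
      obtain ⟨i, hi⟩ := exists_short_chord h2 α hfree hplanar
      set A : ZMod (2 * (k + 1)) := ((2 * k : ℕ) : ZMod (2 * (k + 1))) with hAdef
      obtain ⟨αr, happly, hinvr, hfreer, hplanarr, hcardr⟩ :=
        rotate α hinv hfree hplanar (i - A)
      have hrA : αr A = ((2 * k + 1 : ℕ) : ZMod (2 * (k + 1))) := by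
        rw [happly]
        have h1 : A + (i - A) = i := by ring
        rw [h1, hi, hAdef]
        push_cast
        ring
      obtain ⟨α', hinv', hfree', hplanar', hcard⟩ :=
        contract (M := 2 * k) (by omega) αr hinvr hfreer hplanarr hrA
      have hIH := ih hk1 α' hinv' hfree' hplanar'
      rw [hcardr, hcard, hIH]

section GraphLemmas

open SimpleGraph

lemma connected_card_le {V : Type*} [Fintype V] {G : SimpleGraph V} (hc : G.Connected) :
    Nat.card V ≤ Nat.card G.edgeSet + 1 := by
  classical
  rw [Nat.card_eq_fintype_card]
  obtain ⟨root⟩ := hc.nonempty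
  have key : ∀ v : V, v ≠ root → ∃ u, G.Adj v u ∧ G.dist u root < G.dist v root := by
    intro v hv
    obtain ⟨p, hp⟩ := (hc.preconnected v root).exists_walk_length_eq_dist
    cases p with
    | nil => exact absurd rfl hv
    | @cons _ u _ h q =>
        refine ⟨u, h, ?_⟩
        have h1 : G.dist u root ≤ q.length := SimpleGraph.dist_le q
        rw [SimpleGraph.Walk.length_cons] at hp
        omega
  choose g hadj hlt using key
  set F : {v : V // v ≠ root} → G.edgeSet :=
    fun v => ⟨s(v.1, g v.1 v.2), (hadj v.1 v.2)⟩ with hF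
  have hFinj : Function.Injective F := by
    rintro v w h
    have h2 : s(v.1, g v.1 v.2) = s(w.1, g w.1 w.2) := congrArg Subtype.val h
    rw [Sym2.eq_iff] at h2
    rcases h2 with ⟨h3, h4⟩ | ⟨h3, h4⟩
    · exact Subtype.ext h3
    · exfalso
      have l1 := hlt v.1 v.2
      have l2 := hlt w.1 w.2
      rw [h4] at l1
      rw [← h3] at l2
      omega
  have hle : Nat.card {v : V // v ≠ root} ≤ Nat.card G.edgeSet :=
    Nat.card_le_card_of_injective F hFinj
  have hcv : Nat.card {v : V // v ≠ root} = Fintype.card V - 1 := by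
    rw [Nat.card_eq_fintype_card]
    have := Fintype.card_subtype_compl (fun v : V => v = root)
    rw [Fintype.card_subtype_eq] at this
    convert this using 2
  have hpos : 0 < Fintype.card V := Fintype.card_pos_iff.mpr ⟨root⟩
  omega

lemma delete_edge_connected {V : Type*} {G : SimpleGraph V} {v w : V} (hc : G.Connected)
    (hr : (G \ SimpleGraph.fromEdgeSet {s(v, w)}).Reachable v w) :
    (G \ SimpleGraph.fromEdgeSet {s(v, w)}).Connected := by
  rw [SimpleGraph.connected_iff]
  refine ⟨?_, hc.nonempty⟩
  intro a b
  obtain ⟨p⟩ := hc.preconnected a b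
  induction p with
  | nil => exact SimpleGraph.Reachable.refl _
  | @cons x y _ h q ih =>
      refine SimpleGraph.Reachable.trans ?_ ih
      by_cases he : s(x, y) = s(v, w)
      · rw [Sym2.eq_iff] at he
        rcases he with ⟨rfl, rfl⟩ | ⟨rfl, rfl⟩
        · exact hr
        · exact hr.symm
      · refine SimpleGraph.Adj.reachable ?_
        rw [SimpleGraph.sdiff_adj]
        refine ⟨h, ?_⟩
        rw [SimpleGraph.fromEdgeSet_adj]
        rintro ⟨hm, -⟩
        exact he hm

lemma tree_of_counts {V : Type*} [Fintype V] {G : SimpleGraph V} (hc : G.Connected)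
    (hcard : Nat.card V = Nat.card G.edgeSet + 1) : G.IsTree := by
  refine ⟨hc, ?_⟩
  rw [SimpleGraph.isAcyclic_iff_forall_adj_isBridge]
  intro v w hadj
  rw [SimpleGraph.isBridge_iff]
  refine fun hr => ?_
  have hconn' := delete_edge_connected hc hr
  have hle := connected_card_le hconn'
  have hsub : (G \ SimpleGraph.fromEdgeSet {s(v, w)}).edgeSet ⊆ G.edgeSet \ {s(v, w)} := by
    intro e
    refine Sym2.ind (fun x y he => ?_) e
    rw [SimpleGraph.mem_edgeSet, SimpleGraph.sdiff_adj] at he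
    obtain ⟨h1, h2⟩ := he
    refine ⟨h1, ?_⟩
    intro hmem
    apply h2
    rw [SimpleGraph.fromEdgeSet_adj]
    exact ⟨hmem, h1.ne⟩
  have hss : (G \ SimpleGraph.fromEdgeSet {s(v, w)}).edgeSet ⊂ G.edgeSet := by
    refine ⟨hsub.trans Set.diff_subset, fun hsup => ?_⟩
    have h1 : s(v, w) ∈ G.edgeSet := hadj
    have h2 := hsub (hsup h1)
    exact h2.2 rfl
  have hlt : Nat.card (G \ SimpleGraph.fromEdgeSet {s(v, w)}).edgeSet <
      Nat.card G.edgeSet := by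
    rw [Nat.card_coe_set_eq, Nat.card_coe_set_eq]
    exact Set.ncard_lt_ncard hss (Set.toFinite _)
  omega

end GraphLemmas

section Involution

lemma sameCycle_involution {β : Type*} [Finite β] (α : Equiv.Perm β)
    (hinv : ∀ i, α (α i) = i) (x y : β) : α.SameCycle x y ↔ y = x ∨ y = α x := by
  constructor
  · intro h
    obtain ⟨k, -, rfl⟩ := h.exists_pow_eq'
    clear h
    induction k with
    | zero => left; simp
    | succ k ih =>
        have hk : (α ^ (k + 1)) x = α ((α ^ k) x) := by rw [pow_succ']; rfl
        rcases ih with h | h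
        · right; rw [hk, h]
        · left; rw [hk, h, hinv]
  · rintro (rfl | rfl)
    · exact Equiv.Perm.SameCycle.refl α _
    · exact sameCycle_step α _

lemma card_involution_orbits {β : Type*} [Fintype β] (α : Equiv.Perm β)
    (hinv : ∀ i, α (α i) = i) (hfree : ∀ i, α i ≠ i) :
    Fintype.card β = 2 * Nat.card (Quotient (orbitSetoid α)) := by
  classical
  haveI : Fintype (Quotient (orbitSetoid α)) := Fintype.ofFinite _
  rw [Nat.card_eq_fintype_card]
  have hfib := Finset.card_eq_sum_card_fiberwise
    (f := Quotient.mk (orbitSetoid α)) (s := Finset.univ) (t := Finset.univ)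
    (fun x _ => Finset.mem_univ _)
  have hfib2 : ∀ b : Quotient (orbitSetoid α),
      (Finset.univ.filter fun a => Quotient.mk (orbitSetoid α) a = b).card = 2 := by
    intro b
    induction b using Quotient.ind with
    | _ i =>
      have : (Finset.univ.filter fun a => Quotient.mk (orbitSetoid α) a = Quotient.mk _ i)
          = {i, α i} := by
        ext a
        simp only [Finset.mem_filter, Finset.mem_univ, true_and, Finset.mem_insert,
          Finset.mem_singleton]
        constructor
        · intro h
          have := sameCycle_involution α hinv a i |>.mp (Quotient.exact h)
          rcases this with h | h
          · exact Or.inl h.symm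
          · right
            rw [h, hinv]
        · rintro (rfl | rfl)
          · rfl
          · refine Quotient.sound ?_
            exact ((sameCycle_involution α hinv _ _).mpr (Or.inr rfl)).symm
      rw [this, Finset.card_pair (Ne.symm (hfree i))]
  rw [Finset.sum_congr rfl (fun b _ => hfib2 b), Finset.sum_const, smul_eq_mul] at hfib
  simp only [Finset.card_univ] at hfib
  omega

end Involution


/-- The dual graph of the chord diagram: vertices are the orbits of the loop
permutation `p j = α (j + 1)` (the planar loops), and two distinct orbits `O`, `O'`
are adjacent if and only if there is `i` with `i ∈ O` and `α i ∈ O'`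
(symmetry of this relation follows since `α` is an involution). -/
def dualGraph {m : ℕ} (α : Equiv.Perm (ZMod m)) (hinv : ∀ i, α (α i) = i) :
    SimpleGraph (Quotient (orbitSetoid (loopPerm α))) where
  Adj O O' := O ≠ O' ∧ ∃ i : ZMod m,
    Quotient.mk (orbitSetoid (loopPerm α)) i = O ∧
      Quotient.mk (orbitSetoid (loopPerm α)) (α i) = O'
  symm := by
    constructor
    rintro O O' ⟨hne, i, h1, h2⟩
    refine ⟨hne.symm, α i, h2, ?_⟩
    rw [hinv]
    exact h1
  loopless := by
    constructor
    rintro O ⟨hne, -⟩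
    exact hne rfl

/-- A connected planar chord diagram is dual to a tree: the simple graph whose vertices
are the planar loops (orbits of `p j = α (j + 1)`) and whose edges are given by the
chords is a tree. -/
theorem dualGraph_isTree
    (n : ℕ) (hn : 1 ≤ n) (α : Equiv.Perm (ZMod (2 * n)))
    (hinv : ∀ i, α (α i) = i) (hfree : ∀ i, α i ≠ i)
    (hplanar : NonCrossing α) :
    (dualGraph α hinv).IsTree := by
  classical
  haveI : NeZero (2 * n) := ⟨by omega⟩
  haveI : Fintype (Quotient (orbitSetoid (loopPerm α))) := Fintype.ofFinite _
  -- connectivity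
  have hstep : ∀ x : ZMod (2 * n), (dualGraph α hinv).Reachable
      (Quotient.mk (orbitSetoid (loopPerm α)) x) (Quotient.mk (orbitSetoid (loopPerm α)) (x + 1)) := by
    intro x
    by_cases h : Quotient.mk (orbitSetoid (loopPerm α)) x = Quotient.mk (orbitSetoid (loopPerm α)) (x + 1)
    · rw [h]
    · have hadj : (dualGraph α hinv).Adj (Quotient.mk (orbitSetoid (loopPerm α)) (x + 1)) (Quotient.mk (orbitSetoid (loopPerm α)) x) := by
        refine ⟨Ne.symm h, x + 1, rfl, ?_⟩
        exact Quotient.sound ((sameCycle_step (loopPerm α) x).symm)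
      exact hadj.symm.reachable
  have hreach : ∀ x : ZMod (2 * n), (dualGraph α hinv).Reachable
      (Quotient.mk (orbitSetoid (loopPerm α)) (0 : ZMod (2 * n))) (Quotient.mk (orbitSetoid (loopPerm α)) x) := by
    have hnat : ∀ m : ℕ, (dualGraph α hinv).Reachable (Quotient.mk (orbitSetoid (loopPerm α)) (0 : ZMod (2 * n)))
        (Quotient.mk (orbitSetoid (loopPerm α)) ((m : ℕ) : ZMod (2 * n))) := by
      intro m
      induction m with
      | zero =>
          rw [Nat.cast_zero]
      | succ m ih =>
          have : ((m + 1 : ℕ) : ZMod (2 * n)) = ((m : ℕ) : ZMod (2 * n)) + 1 := by push_cast; ring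
          rw [this]
          exact ih.trans (hstep _)
    intro x
    have := hnat x.val
    rwa [ZMod.natCast_rightInverse x] at this
  have hconn : (dualGraph α hinv).Connected := by
    rw [SimpleGraph.connected_iff]
    refine ⟨?_, ⟨Quotient.mk (orbitSetoid (loopPerm α)) 0⟩⟩
    intro O O'
    induction O using Quotient.ind with
    | _ x =>
      induction O' using Quotient.ind with
      | _ y => exact (hreach x).symm.trans (hreach y)
  -- vertex count
  have hV : Nat.card (Quotient (orbitSetoid (loopPerm α))) = n + 1 :=
    card_orbits n hn α hinv hfree hplanar
  -- edge count
  have hCn : 2 * Nat.card (Quotient (orbitSetoid α)) = 2 * n := by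
    have := card_involution_orbits α hinv hfree
    rw [ZMod.card] at this
    omega
  have hex : ∀ e : (dualGraph α hinv).edgeSet, ∃ i : ZMod (2 * n),
      s(Quotient.mk (orbitSetoid (loopPerm α)) i, Quotient.mk (orbitSetoid (loopPerm α)) (α i)) = e.1 := by
    rintro ⟨e, he⟩
    revert he
    refine Sym2.ind (fun O O' he => ?_) e
    rw [SimpleGraph.mem_edgeSet] at he
    obtain ⟨hne, i, h1, h2⟩ := he
    exact ⟨i, by rw [h1, h2]⟩
  have hE : Nat.card (dualGraph α hinv).edgeSet ≤ n := by
    choose cf hcf using hex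
    have hinj : Function.Injective (fun e : (dualGraph α hinv).edgeSet => Quotient.mk (orbitSetoid α) (cf e)) := by
      intro e e' h
      have hsc := (sameCycle_involution α hinv (cf e) (cf e')).mp (Quotient.exact h)
      apply Subtype.ext
      rw [← hcf e, ← hcf e']
      rcases hsc with h | h
      · rw [h]
      · rw [h, hinv]
        exact Sym2.eq_swap
    have := Nat.card_le_card_of_injective _ hinj
    omega
  -- assemble
  have hlow := connected_card_le hconn
  have hgoal : Nat.card (Quotient (orbitSetoid (loopPerm α))) =
      Nat.card (dualGraph α hinv).edgeSet + 1 := by omega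
  exact tree_of_counts hconn hgoal
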